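/- The transformed propagation Jacobian T_k F_{k-1} T_{k-1}⁻¹ for two robots is block upper-triangular when the correction terms Δ vanish: if p̂_{i,k|k} = p̂_{i,k|k-1} for both robots, then the (observable-row, unobservable-column) off-diagonal blocks of T_k F_{k-1} T_{k-1}⁻¹ in the orientation column are zero. -/

import Mathlib

open Matrix

def J : Matrix (Fin 3) (Fin 3) ℝ := !![0,-1,0; 1,0,0; 0,0,0]

/-- The 8×8 Kalman-decomposition transformation matrix for n = 2 robots. -/
def T (p₁ p₂ : Fin 3 → ℝ) : Matrix (Fin 8) (Fin 8) ℝ :=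
  !![1,0,0, (J *ᵥ (p₂ - p₁)) 0, -1, 0, 0, 0;
     0,1,0, (J *ᵥ (p₂ - p₁)) 1,  0,-1, 0, 0;
     0,0,1, (J *ᵥ (p₂ - p₁)) 2,  0, 0,-1, 0;
     0,0,0, -1,                  0, 0, 0, 1;
     0,0,0,  1,                  0, 0, 0, 0;
     1,0,0,  0,                  0, 0, 0, 0;
     0,1,0,  0,                  0, 0, 0, 0;
     0,0,1,  0,                  0, 0, 0, 0]

/-- Two-robot block-diagonal propagation Jacobian
`blockdiag([[I₃, Jδ₁],[0,1]], [[I₃, Jδ₂],[0,1]])`. -/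
def F2 (δ₁ δ₂ : Fin 3 → ℝ) : Matrix (Fin 8) (Fin 8) ℝ :=
  !![1,0,0, (J *ᵥ δ₁) 0, 0,0,0, 0;
     0,1,0, (J *ᵥ δ₁) 1, 0,0,0, 0;
     0,0,1, (J *ᵥ δ₁) 2, 0,0,0, 0;
     0,0,0, 1,           0,0,0, 0;
     0,0,0, 0,           1,0,0, (J *ᵥ δ₂) 0;
     0,0,0, 0,           0,1,0, (J *ᵥ δ₂) 1;
     0,0,0, 0,           0,0,1, (J *ᵥ δ₂) 2;
     0,0,0, 0,           0,0,0, 1]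

private lemma finlit_2_1 : (1 : Fin 2) = Fin.succ (0 : Fin 1) := rfl
private lemma finlit_3_1 : (1 : Fin 3) = Fin.succ (0 : Fin 2) := rfl
private lemma finlit_3_2 : (2 : Fin 3) = Fin.succ (1 : Fin 2) := rfl
private lemma finlit_4_1 : (1 : Fin 4) = Fin.succ (0 : Fin 3) := rfl
private lemma finlit_4_2 : (2 : Fin 4) = Fin.succ (1 : Fin 3) := rfl
private lemma finlit_4_3 : (3 : Fin 4) = Fin.succ (2 : Fin 3) := rfl
private lemma finlit_5_1 : (1 : Fin 5) = Fin.succ (0 : Fin 4) := rfl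
private lemma finlit_5_2 : (2 : Fin 5) = Fin.succ (1 : Fin 4) := rfl
private lemma finlit_5_3 : (3 : Fin 5) = Fin.succ (2 : Fin 4) := rfl
private lemma finlit_5_4 : (4 : Fin 5) = Fin.succ (3 : Fin 4) := rfl
private lemma finlit_6_1 : (1 : Fin 6) = Fin.succ (0 : Fin 5) := rfl
private lemma finlit_6_2 : (2 : Fin 6) = Fin.succ (1 : Fin 5) := rfl
private lemma finlit_6_3 : (3 : Fin 6) = Fin.succ (2 : Fin 5) := rfl
private lemma finlit_6_4 : (4 : Fin 6) = Fin.succ (3 : Fin 5) := rfl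
private lemma finlit_6_5 : (5 : Fin 6) = Fin.succ (4 : Fin 5) := rfl
private lemma finlit_7_1 : (1 : Fin 7) = Fin.succ (0 : Fin 6) := rfl
private lemma finlit_7_2 : (2 : Fin 7) = Fin.succ (1 : Fin 6) := rfl
private lemma finlit_7_3 : (3 : Fin 7) = Fin.succ (2 : Fin 6) := rfl
private lemma finlit_7_4 : (4 : Fin 7) = Fin.succ (3 : Fin 6) := rfl
private lemma finlit_7_5 : (5 : Fin 7) = Fin.succ (4 : Fin 6) := rfl
private lemma finlit_7_6 : (6 : Fin 7) = Fin.succ (5 : Fin 6) := rfl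
private lemma finlit_8_1 : (1 : Fin 8) = Fin.succ (0 : Fin 7) := rfl
private lemma finlit_8_2 : (2 : Fin 8) = Fin.succ (1 : Fin 7) := rfl
private lemma finlit_8_3 : (3 : Fin 8) = Fin.succ (2 : Fin 7) := rfl
private lemma finlit_8_4 : (4 : Fin 8) = Fin.succ (3 : Fin 7) := rfl
private lemma finlit_8_5 : (5 : Fin 8) = Fin.succ (4 : Fin 7) := rfl
private lemma finlit_8_6 : (6 : Fin 8) = Fin.succ (5 : Fin 7) := rfl
private lemma finlit_8_7 : (7 : Fin 8) = Fin.succ (6 : Fin 7) := rfl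

def Tinv (p₁ p₂ : Fin 3 → ℝ) : Matrix (Fin 8) (Fin 8) ℝ :=
  !![0,0,0,0, 0,1,0,0;
     0,0,0,0, 0,0,1,0;
     0,0,0,0, 0,0,0,1;
     0,0,0,0, 1,0,0,0;
     -1,0,0,0, (J *ᵥ (p₂ - p₁)) 0, 1,0,0;
     0,-1,0,0, (J *ᵥ (p₂ - p₁)) 1, 0,1,0;
     0,0,-1,0, (J *ᵥ (p₂ - p₁)) 2, 0,0,1;
     0,0,0,1, 1,0,0,0]

set_option maxHeartbeats 1000000 in
lemma T_mul_Tinv (p₁ p₂ : Fin 3 → ℝ) : T p₁ p₂ * Tinv p₁ p₂ = 1 := by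
  unfold T Tinv
  generalize (J *ᵥ (p₂ - p₁)) = a
  ext i j
  fin_cases i <;> fin_cases j <;>
    simp [Matrix.mul_apply, Fin.sum_univ_eight, Matrix.one_apply, finlit_2_1, finlit_3_1, finlit_3_2, finlit_4_1, finlit_4_2, finlit_4_3, finlit_5_1, finlit_5_2, finlit_5_3, finlit_5_4, finlit_6_1, finlit_6_2, finlit_6_3, finlit_6_4, finlit_6_5, finlit_7_1, finlit_7_2, finlit_7_3, finlit_7_4, finlit_7_5, finlit_7_6, finlit_8_1, finlit_8_2, finlit_8_3, finlit_8_4, finlit_8_5, finlit_8_6, finlit_8_7, Matrix.cons_val_succ, Matrix.cons_val_zero, Matrix.vecHead, Matrix.vecTail]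

lemma Tinv_eq (p₁ p₂ : Fin 3 → ℝ) : (T p₁ p₂)⁻¹ = Tinv p₁ p₂ :=
  inv_eq_right_inv (T_mul_Tinv p₁ p₂)

def TF (a b c : Fin 3 → ℝ) : Matrix (Fin 8) (Fin 8) ℝ :=
  !![1,0,0, b 0 + a 0, -1,0,0, -(c 0);
     0,1,0, b 1 + a 1, 0,-1,0, -(c 1);
     0,0,1, b 2 + a 2, 0,0,-1, -(c 2);
     0,0,0, -1, 0,0,0, 1;
     0,0,0, 1, 0,0,0, 0;
     1,0,0, b 0, 0,0,0, 0;
     0,1,0, b 1, 0,0,0, 0;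
     0,0,1, b 2, 0,0,0, 0]

set_option maxHeartbeats 1000000 in
lemma step1 (p₁ p₂ δ₁ δ₂ : Fin 3 → ℝ) :
    T p₁ p₂ * F2 δ₁ δ₂ = TF (J *ᵥ (p₂ - p₁)) (J *ᵥ δ₁) (J *ᵥ δ₂) := by
  unfold T F2 TF
  generalize (J *ᵥ (p₂ - p₁)) = a
  generalize (J *ᵥ δ₁) = b
  generalize (J *ᵥ δ₂) = c
  ext i j
  fin_cases i <;> fin_cases j <;>
    (simp [Matrix.mul_apply, Fin.sum_univ_eight, finlit_2_1, finlit_3_1, finlit_3_2, finlit_4_1, finlit_4_2, finlit_4_3, finlit_5_1, finlit_5_2, finlit_5_3, finlit_5_4, finlit_6_1, finlit_6_2, finlit_6_3, finlit_6_4, finlit_6_5, finlit_7_1, finlit_7_2, finlit_7_3, finlit_7_4, finlit_7_5, finlit_7_6, finlit_8_1, finlit_8_2, finlit_8_3, finlit_8_4, finlit_8_5, finlit_8_6, finlit_8_7, Matrix.cons_val_succ, Matrix.cons_val_zero, Matrix.vecHead, Matrix.vecTail] <;> ring)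

def Final (a b c d : Fin 3 → ℝ) : Matrix (Fin 8) (Fin 8) ℝ :=
  !![1,0,0, -(c 0), b 0 + a 0 - d 0 - c 0, 0,0,0;
     0,1,0, -(c 1), b 1 + a 1 - d 1 - c 1, 0,0,0;
     0,0,1, -(c 2), b 2 + a 2 - d 2 - c 2, 0,0,0;
     0,0,0, 1, 0, 0,0,0;
     0,0,0, 0, 1, 0,0,0;
     0,0,0, 0, b 0, 1,0,0;
     0,0,0, 0, b 1, 0,1,0;
     0,0,0, 0, b 2, 0,0,1]

set_option maxHeartbeats 1000000 in
lemma step2 (a b c r₁ r₂ : Fin 3 → ℝ) :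
    TF a b c * Tinv r₁ r₂ = Final a b c (J *ᵥ (r₂ - r₁)) := by
  unfold TF Tinv Final
  generalize (J *ᵥ (r₂ - r₁)) = d
  ext i j
  fin_cases i <;> fin_cases j <;>
    (simp [Matrix.mul_apply, Fin.sum_univ_eight, finlit_2_1, finlit_3_1, finlit_3_2, finlit_4_1, finlit_4_2, finlit_4_3, finlit_5_1, finlit_5_2, finlit_5_3, finlit_5_4, finlit_6_1, finlit_6_2, finlit_6_3, finlit_6_4, finlit_6_5, finlit_7_1, finlit_7_2, finlit_7_3, finlit_7_4, finlit_7_5, finlit_7_6, finlit_8_1, finlit_8_2, finlit_8_3, finlit_8_4, finlit_8_5, finlit_8_6, finlit_8_7, Matrix.cons_val_succ, Matrix.cons_val_zero, Matrix.vecHead, Matrix.vecTail] <;> ring)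

theorem stmt_18
    (r₁ r₂ : Fin 3 → ℝ)   -- estimates p̂_{i,k-1|k-1}
    (q₁ q₂ : Fin 3 → ℝ)   -- predictions p̂_{i,k|k-1}
    (s₁ s₂ : Fin 3 → ℝ)   -- updated estimates p̂_{i,k|k}
    (h₁ : s₁ = q₁) (h₂ : s₂ = q₂) :
    J *ᵥ ((q₂ - s₂) - (q₁ - s₁)) = 0 ∧
    ∀ (i j : Fin 8), (i : ℕ) < 4 → 4 ≤ (j : ℕ) →
      (T s₁ s₂ * F2 (q₁ - r₁) (q₂ - r₂) * (T r₁ r₂)⁻¹) i j = 0 := by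
  refine ⟨by simp [h₁, h₂], ?_⟩
  intro i j hi hj
  rw [h₁, h₂, Tinv_eq, step1, step2]
  have hvec : J *ᵥ (q₂ - q₁) + J *ᵥ (q₁ - r₁) - J *ᵥ (q₂ - r₂) - J *ᵥ (r₂ - r₁) = 0 := by
    rw [← Matrix.mulVec_add, ← Matrix.mulVec_sub, ← Matrix.mulVec_sub]
    have : q₂ - q₁ + (q₁ - r₁) - (q₂ - r₂) - (r₂ - r₁) = 0 := by abel
    rw [this, Matrix.mulVec_zero]
  have h0 : ∀ m : Fin 3, (J *ᵥ (q₁ - r₁)) m + (J *ᵥ (q₂ - q₁)) m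
      - (J *ᵥ (r₂ - r₁)) m - (J *ᵥ (q₂ - r₂)) m = 0 := by
    intro m
    have := congrFun hvec m
    simp only [Pi.add_apply, Pi.sub_apply, Pi.zero_apply] at this ⊢
    linarith
  fin_cases i <;> fin_cases j <;>
    first
      | rfl
      | exact h0 0
      | exact h0 1
      | exact h0 2
      | exact hi.elim
      | exact hj.elim
      | norm_num at hi hj
      | norm_num at hi
      | norm_num at hj
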